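/- Let X and Y be integrable random variables on the same probability space, let A be an event with probability q, and suppose: X = Y outside A, Y ≥ X everywhere, and on A both X and Y take only values ≥ max(E(X), E(Y)). Then MAD(Y) − MAD(X) ≤ 2·E((Y − X)·1_A) = 2·(E(Y) − E(X)). -/

import Mathlib

open MeasureTheory

/-- If X = Y outside A, Y ≥ X everywhere, and on A both X and Y take only values
    ≥ max(E(X), E(Y)), then MAD(Y) - MAD(X) ≤ 2·E((Y - X)·1_A) = 2·(E(Y) - E(X)). -/
theorem mad_diff_le {Ω : Type*} [MeasurableSpace Ω] (μ : Measure Ω)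
    [IsProbabilityMeasure μ] (X Y : Ω → ℝ) (hX : Integrable X μ) (hY : Integrable Y μ)
    (A : Set Ω) (hA : MeasurableSet A)
    (heq : ∀ ω ∉ A, X ω = Y ω)
    (hle : ∀ ω, X ω ≤ Y ω)
    (hbig : ∀ ω ∈ A, max (∫ ω', X ω' ∂μ) (∫ ω', Y ω' ∂μ) ≤ X ω) :
    (∫ ω, |Y ω - ∫ ω', Y ω' ∂μ| ∂μ) - (∫ ω, |X ω - ∫ ω', X ω' ∂μ| ∂μ)
        ≤ 2 * ∫ ω, A.indicator (fun ω' => Y ω' - X ω') ω ∂μ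
      ∧ (∫ ω, A.indicator (fun ω' => Y ω' - X ω') ω ∂μ)
          = (∫ ω, Y ω ∂μ) - ∫ ω, X ω ∂μ := by
  set EX := ∫ ω', X ω' ∂μ with hEX
  set EY := ∫ ω', Y ω' ∂μ with hEY
  have hind : A.indicator (fun ω' => Y ω' - X ω') = fun ω => Y ω - X ω := by
    funext ω
    by_cases h : ω ∈ A
    · simp [Set.indicator_of_mem h]
    · simp [Set.indicator_of_notMem h, heq ω h]
  have h2 : (∫ ω, A.indicator (fun ω' => Y ω' - X ω') ω ∂μ) = EY - EX := by
    calc (∫ ω, A.indicator (fun ω' => Y ω' - X ω') ω ∂μ)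
        = ∫ ω, (Y ω - X ω) ∂μ := by rw [hind]
      _ = EY - EX := integral_sub hY hX
  refine ⟨?_, h2⟩
  rw [h2]
  have hdnn : 0 ≤ EY - EX := by
    have := integral_mono hX hY hle
    linarith
  have key : ∀ ω, |Y ω - EY| ≤ |X ω - EX| + ((Y ω - X ω) + (EY - EX)) := by
    intro ω
    have h1 : Y ω - EY = (X ω - EX) + ((Y ω - X ω) - (EY - EX)) := by ring
    have h3 : |(Y ω - X ω) - (EY - EX)| ≤ (Y ω - X ω) + (EY - EX) :=
      abs_le.mpr ⟨by linarith [hle ω], by linarith [hle ω]⟩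
    calc |Y ω - EY| ≤ |X ω - EX| + |(Y ω - X ω) - (EY - EX)| := by
          rw [h1]; exact abs_add_le _ _
      _ ≤ |X ω - EX| + ((Y ω - X ω) + (EY - EX)) := by linarith
  have hi1 : Integrable (fun ω => |Y ω - EY|) μ := (hY.sub (integrable_const EY)).abs
  have hi2 : Integrable (fun ω => |X ω - EX|) μ := (hX.sub (integrable_const EX)).abs
  have hi3 : Integrable (fun ω => (Y ω - X ω) + (EY - EX)) μ :=
    (hY.sub hX).add (integrable_const _)
  have hmono : (∫ ω, |Y ω - EY| ∂μ) ≤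
      ∫ ω, (|X ω - EX| + ((Y ω - X ω) + (EY - EX))) ∂μ :=
    integral_mono hi1 (hi2.add hi3) key
  have hsplit : (∫ ω, (|X ω - EX| + ((Y ω - X ω) + (EY - EX))) ∂μ)
      = (∫ ω, |X ω - EX| ∂μ) + ((EY - EX) + (EY - EX)) := by
    have hi4 : Integrable (fun ω => Y ω - X ω) μ := hY.sub hX
    rw [integral_add hi2 hi3, integral_add hi4 (integrable_const _),
      integral_sub hY hX, integral_const]
    simp
    rfl
  linarith [hmono, hsplit.symm ▸ hmono]
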